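/- Let n be a positive integer and G = S_n ≀ S_2. The subgroup G′ of G generated by the involutive swaps is exactly the set of elements (σ, τ, b) ∈ G such that σ and τ have the same sign, i.e., σ and τ are both even permutations or both odd permutations. -/

import Mathlib

open scoped Classical

@[ext] structure Wr (n : ℕ) where
  fst : Equiv.Perm (Fin n)
  snd : Equiv.Perm (Fin n)
  bit : ZMod 2
  deriving DecidableEq, Fintype

namespace Wr

variable {n : ℕ}

protected def mul (x y : Wr n) : Wr n :=
  ⟨if x.bit = 0 then x.fst * y.fst else x.fst * y.snd,
   if x.bit = 0 then x.snd * y.snd else x.snd * y.fst,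
   x.bit + y.bit⟩

protected def inv (x : Wr n) : Wr n :=
  ⟨if x.bit = 0 then x.fst⁻¹ else x.snd⁻¹,
   if x.bit = 0 then x.snd⁻¹ else x.fst⁻¹,
   x.bit⟩

instance : Group (Wr n) where
  mul := Wr.mul
  one := ⟨1, 1, 0⟩
  inv := Wr.inv
  mul_assoc x y z := by
    show Wr.mul (Wr.mul x y) z = Wr.mul x (Wr.mul y z)
    obtain ⟨a, b, c⟩ := x; obtain ⟨d, e, f⟩ := y; obtain ⟨g, h, i⟩ := z
    obtain rfl | rfl := (by decide : ∀ j : ZMod 2, j = 0 ∨ j = 1) c <;> obtain rfl | rfl := (by decide : ∀ j : ZMod 2, j = 0 ∨ j = 1) f <;>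
      simp [Wr.mul, mul_assoc, show (1 : ZMod 2) ≠ 0 by decide,
        show (1 + 1 : ZMod 2) = 0 by decide, show ∀ j : ZMod 2, 1 + (1 + j) = j by decide]
  one_mul x := by
    show Wr.mul ⟨1, 1, 0⟩ x = x
    simp [Wr.mul]
  mul_one x := by
    show Wr.mul x ⟨1, 1, 0⟩ = x
    obtain ⟨a, b, c⟩ := x
    obtain rfl | rfl := (by decide : ∀ j : ZMod 2, j = 0 ∨ j = 1) c <;> simp [Wr.mul]
  inv_mul_cancel x := by
    show Wr.mul (Wr.inv x) x = ⟨1, 1, 0⟩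
    obtain ⟨a, b, c⟩ := x
    obtain rfl | rfl := (by decide : ∀ j : ZMod 2, j = 0 ∨ j = 1) c <;> simp [Wr.mul, Wr.inv, show (1 : ZMod 2) ≠ 0 by decide,
      show (1 + 1 : ZMod 2) = 0 by decide]

/-- An involutive swap: an element of the form `(g, g⁻¹, 1)`. -/
def IsSwap (k : Wr n) : Prop := ∃ g : Equiv.Perm (Fin n), k = ⟨g, g⁻¹, 1⟩

/-- The faithful action of `S_n ≀ S_2` on `Fin n ⊕ Fin n`:
`ι(σ,τ,0)` maps `inl i ↦ inl (σ i)`, `inr i ↦ inr (τ i)`, while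
`ι(σ,τ,1)` maps `inl i ↦ inr (τ i)`, `inr i ↦ inl (σ i)`. -/
def iota : Wr n →* Equiv.Perm (Fin n ⊕ Fin n) where
  toFun x := Equiv.sumCongr x.fst x.snd *
    (if x.bit = 0 then 1 else Equiv.sumComm (Fin n) (Fin n))
  map_one' := by
    simp [show ((1 : Wr n)).bit = 0 from rfl, show ((1 : Wr n)).fst = 1 from rfl,
      show ((1 : Wr n)).snd = 1 from rfl]
  map_mul' x y := by
    have hxy : x * y = Wr.mul x y := rfl
    obtain ⟨a, b, c⟩ := x; obtain ⟨d, e, f⟩ := y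
    rw [hxy]
    obtain rfl | rfl := (by decide : ∀ j : ZMod 2, j = 0 ∨ j = 1) c <;> obtain rfl | rfl := (by decide : ∀ j : ZMod 2, j = 0 ∨ j = 1) f <;>
      · ext u
        rcases u with u | u <;>
          simp [Wr.mul, show (1 : ZMod 2) ≠ 0 by decide,
            show (1 + 1 : ZMod 2) = 0 by decide, Equiv.Perm.mul_apply]

end Wr

/-- The Hilbert space `ℂ[G^m]`. -/
abbrev GIHilb (n m : ℕ) : Type := EuclideanSpace ℂ (Fin m → Wr n)

noncomputable section

namespace Wr

/-- The `k`-vector associated to `c ∈ G^m`: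
`x ↦ 2^{-m/2} ∏_i [x i ∈ {c i, c i * k}]`. -/
def kvec (n m : ℕ) (k : Wr n) (c : Fin m → Wr n) : GIHilb n m :=
  (WithLp.equiv 2 _).symm fun x =>
    ((Real.sqrt (2 ^ m) : ℝ)⁻¹ : ℂ) *
      ∏ i, (if x i = c i ∨ x i = c i * k then (1 : ℂ) else 0)

/-- `ℋ(k)`: the span of all `k`-vectors. -/
def kSpace (n m : ℕ) (k : Wr n) : Submodule ℂ (GIHilb n m) :=
  Submodule.span ℂ (Set.range (kvec n m k))

/-- `ℋ₁ = ∑_k ℋ(k)`, the sum over all involutive swaps `k`. -/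
def H1 (n m : ℕ) : Submodule ℂ (GIHilb n m) :=
  ⨆ k ∈ {k : Wr n | IsSwap k}, kSpace n m k

/-- The tensor product of coset states of the subgroup `H` with coset representatives `c`:
`x ↦ |H|^{-m/2} ∏_i [x i ∈ c i H]`. -/
def cosetState {n : ℕ} (H : Subgroup (Wr n)) (m : ℕ) (c : Fin m → Wr n) : GIHilb n m :=
  (WithLp.equiv 2 _).symm fun x =>
    ((Real.sqrt ((Nat.card H : ℝ) ^ m))⁻¹ : ℂ) *
      ∏ i, (if (c i)⁻¹ * x i ∈ H then (1 : ℂ) else 0)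

end Wr

/-- The subgroup of `S_n ≀ S_2` of elements acting (via `ι`) as automorphisms of the graph `Γ`. -/
def autSubgroup {n : ℕ} (Γ : SimpleGraph (Fin n ⊕ Fin n)) : Subgroup (Wr n) where
  carrier := {h | ∀ u v, Γ.Adj (Wr.iota h u) (Wr.iota h v) ↔ Γ.Adj u v}
  one_mem' := by intro u v; simp
  mul_mem' := by
    intro a b ha hb u v
    rw [map_mul, Equiv.Perm.mul_apply, Equiv.Perm.mul_apply, ha, hb]
  inv_mem' := by
    intro a ha u v
    have := ha ((Wr.iota a)⁻¹ u) ((Wr.iota a)⁻¹ v)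
    simpa [map_inv] using this.symm

end

section Aux

open Equiv Equiv.Perm

variable {n : ℕ}

private abbrev Csw (n : ℕ) : Subgroup (Wr n) :=
  Subgroup.closure {k : Wr n | Wr.IsSwap k}

private lemma wr_mul_def (x y : Wr n) : x * y = Wr.mul x y := rfl

private lemma swap_mem (g : Perm (Fin n)) : (⟨g, g⁻¹, 1⟩ : Wr n) ∈ Csw n :=
  Subgroup.subset_closure ⟨g, rfl⟩

private lemma pair_mem (g : Perm (Fin n)) : (⟨g, g⁻¹, 0⟩ : Wr n) ∈ Csw n := by
  have h : (⟨g, g⁻¹, 0⟩ : Wr n) = (⟨g, g⁻¹, 1⟩ : Wr n) * ⟨1, 1, 1⟩ := by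
    rw [wr_mul_def]
    simp [Wr.mul, show (1 : ZMod 2) ≠ 0 by decide, show (1 + 1 : ZMod 2) = 0 by decide]
  rw [h]
  exact mul_mem (swap_mem g) (swap_mem 1)

private lemma commutator_mem (g h : Perm (Fin n)) :
    (⟨g * h * g⁻¹ * h⁻¹, 1, 0⟩ : Wr n) ∈ Csw n := by
  have key : (⟨g * h * g⁻¹ * h⁻¹, 1, 0⟩ : Wr n) =
      (⟨g, g⁻¹, 0⟩ : Wr n) * ⟨h, h⁻¹, 0⟩ * ⟨(h * g)⁻¹, ((h * g)⁻¹)⁻¹, 0⟩ := by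
    rw [wr_mul_def, wr_mul_def]
    simp [Wr.mul, mul_assoc]
  rw [key]
  exact mul_mem (mul_mem (pair_mem g) (pair_mem h)) (pair_mem (h * g)⁻¹)

/-- The embedding `σ ↦ (σ, 1, 0)`. -/
private def jleft : Perm (Fin n) →* Wr n where
  toFun σ := ⟨σ, 1, 0⟩
  map_one' := rfl
  map_mul' σ τ := by rw [wr_mul_def]; simp [Wr.mul]

private lemma left_mem {σ : Perm (Fin n)} (hσ : Equiv.Perm.sign σ = 1) :
    (⟨σ, 1, 0⟩ : Wr n) ∈ Csw n := by
  have hmem : σ ∈ alternatingGroup (Fin n) := Equiv.Perm.mem_alternatingGroup.mpr hσ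
  have hle : alternatingGroup (Fin n) ≤ (Csw n).comap jleft := by
    rw [← Equiv.Perm.closure_three_cycles_eq_alternating]
    rw [Subgroup.closure_le]
    intro τ hτ
    have h2 : (τ * τ).IsThreeCycle := hτ.isThreeCycle_sq
    have hconj : IsConj τ (τ * τ) :=
      Equiv.Perm.isConj_of_cycleType_eq (by rw [hτ.cycleType, h2.cycleType])
    obtain ⟨g, hg⟩ := isConj_iff.mp hconj
    have hτeq : τ⁻¹ * g * (τ⁻¹)⁻¹ * g⁻¹ = τ := by
      have h3 : τ⁻¹ * g * (τ⁻¹)⁻¹ * g⁻¹ = τ⁻¹ * (g * τ * g⁻¹) := by group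
      rw [h3, hg]; group
    show jleft τ ∈ Csw n
    have : jleft τ = (⟨τ⁻¹ * g * (τ⁻¹)⁻¹ * g⁻¹, 1, 0⟩ : Wr n) := by
      simp only [jleft, MonoidHom.coe_mk, OneHom.coe_mk]
      ext1
      · exact hτeq.symm
      · rfl
      · rfl
    rw [this]
    exact commutator_mem τ⁻¹ g
  exact hle hmem

/-- Sign homomorphism `(σ, τ, b) ↦ sign σ * sign τ`. -/
private def sgn2 : Wr n →* ℤˣ where
  toFun x := Equiv.Perm.sign x.fst * Equiv.Perm.sign x.snd
  map_one' := by
    show Equiv.Perm.sign (1 : Perm (Fin n)) * Equiv.Perm.sign (1 : Perm (Fin n)) = 1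
    simp
  map_mul' x y := by
    rw [wr_mul_def]
    obtain ⟨a, b, c⟩ := x; obtain ⟨d, e, f⟩ := y
    by_cases hc : c = 0 <;> simp [Wr.mul, hc, mul_comm, mul_left_comm, mul_assoc]

end Aux

/-- The subgroup of `G = S_n ≀ S_2` generated by the involutive swaps consists exactly of the
elements `(σ, τ, b)` with `sign σ = sign τ`. -/
theorem mem_closure_swaps_iff_sign_eq
    (n : ℕ) (hn : 0 < n) (x : Wr n) :
    x ∈ Subgroup.closure {k : Wr n | Wr.IsSwap k} ↔
      Equiv.Perm.sign x.fst = Equiv.Perm.sign x.snd := by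
  constructor
  · intro hx
    have hle : Subgroup.closure {k : Wr n | Wr.IsSwap k} ≤ sgn2.ker := by
      rw [Subgroup.closure_le]
      rintro k ⟨g, rfl⟩
      show Equiv.Perm.sign g * Equiv.Perm.sign g⁻¹ = 1
      simp
    have h1 : Equiv.Perm.sign x.fst * Equiv.Perm.sign x.snd = 1 := hle hx
    rcases Int.units_eq_one_or (Equiv.Perm.sign x.fst) with h | h <;>
      rcases Int.units_eq_one_or (Equiv.Perm.sign x.snd) with h' | h' <;>
        rw [h, h'] at h1 ⊢ <;> first | rfl | simp at h1
  · intro hsgn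
    obtain ⟨σ, τ, b⟩ := x
    simp only at hsgn
    have hστ : Equiv.Perm.sign (σ * τ) = 1 := by
      rw [map_mul, hsgn]
      exact Int.units_mul_self _
    have h0 : (⟨σ, τ, 0⟩ : Wr n) ∈ Csw n := by
      have key : (⟨σ, τ, 0⟩ : Wr n) = (⟨σ * τ, 1, 0⟩ : Wr n) * ⟨τ⁻¹, (τ⁻¹)⁻¹, 0⟩ := by
        rw [wr_mul_def]
        simp [Wr.mul, mul_assoc]
      rw [key]
      exact mul_mem (left_mem hστ) (pair_mem τ⁻¹)
    have hb : b = 0 ∨ b = 1 := by revert b; decide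
    rcases hb with rfl | rfl
    · exact h0
    · have key : (⟨σ, τ, 1⟩ : Wr n) = (⟨σ, τ, 0⟩ : Wr n) * ⟨1, 1, 1⟩ := by
        rw [wr_mul_def]
        simp [Wr.mul]
      rw [key]
      exact mul_mem h0 (swap_mem 1)
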